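/- If G is a graph of order n with a vertex u of degree n−2, then γtg(G) ≤ 3. -/

import Mathlib

open scoped Classical

/-- The value of the total domination game on `G` with the set `D` of vertices
already totally dominated; `dTurn = true` means Dominator (minimizer) to move,
`dTurn = false` means Staller (maximizer) to move. Each move must be a vertex
totally dominating at least one vertex not in `D`; the value is the number of
moves played until no legal move remains, under optimal play. -/
noncomputable def tgVal {V : Type*} [Fintype V] (G : SimpleGraph V)
    (dTurn : Bool) (D : Finset V) : ℕ :=
  if h : (Finset.univ.filter fun v => ∃ u, G.Adj v u ∧ u ∉ D).Nonempty then
    1 + (if dTurn then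
          ((Finset.univ.filter fun v => ∃ u, G.Adj v u ∧ u ∉ D).attach).inf'
            (Finset.attach_nonempty_iff.mpr h)
            (fun v => tgVal G false (D ∪ G.neighborFinset v.1))
        else
          ((Finset.univ.filter fun v => ∃ u, G.Adj v u ∧ u ∉ D).attach).sup'
            (Finset.attach_nonempty_iff.mpr h)
            (fun v => tgVal G true (D ∪ G.neighborFinset v.1)))
  else 0
termination_by (Finset.univ \ D).card
decreasing_by
  all_goals
  · obtain ⟨v, hv⟩ := v
    simp only [Finset.mem_filter, Finset.mem_univ, true_and] at hv
    obtain ⟨u, hadj, hu⟩ := hv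
    apply Finset.card_lt_card
    rw [Finset.ssubset_iff_of_subset
      (Finset.sdiff_subset_sdiff (subset_refl _) Finset.subset_union_left)]
    exact ⟨u, by simp [hu], by simp [hadj]⟩

/-- The game total domination number (Dominator starts). -/
noncomputable def gammaTG {V : Type*} [Fintype V] (G : SimpleGraph V) : ℕ :=
  tgVal G true ∅

/-- The Staller-start game total domination number. -/
noncomputable def gammaTG' {V : Type*} [Fintype V] (G : SimpleGraph V) : ℕ :=
  tgVal G false ∅

/-- The game total domination number of `G|S` (vertices of `S` already totally dominated). -/
noncomputable def gammaTGSub {V : Type*} [Fintype V] (G : SimpleGraph V) (S : Finset V) : ℕ :=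
  tgVal G true S

/-- `G` is total domination game critical. -/
def IsTGCritical {V : Type*} [Fintype V] (G : SimpleGraph V) : Prop :=
  ∀ v : V, gammaTGSub G {v} < gammaTG G

/-- `G` is `k`-`γtg`-critical. -/
def IsKTGCritical {V : Type*} [Fintype V] (k : ℕ) (G : SimpleGraph V) : Prop :=
  gammaTG G = k ∧ IsTGCritical G

lemma tgVal_eq_zero {V : Type*} [Fintype V] (G : SimpleGraph V) (b : Bool) (D : Finset V)
    (h : ∀ w : V, w ∈ D) : tgVal G b D = 0 := by
  have hne : ¬ (Finset.univ.filter fun v => ∃ u, G.Adj v u ∧ u ∉ D).Nonempty := by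
    simp [Finset.filter_eq_empty_iff, h, Finset.not_nonempty_iff_eq_empty]
  rw [tgVal, dif_neg hne]

lemma tgVal_true_le {V : Type*} [Fintype V] (G : SimpleGraph V) (D : Finset V) (v : V)
    (hv : ∃ w, G.Adj v w ∧ w ∉ D) :
    tgVal G true D ≤ 1 + tgVal G false (D ∪ G.neighborFinset v) := by
  have hmem : v ∈ Finset.univ.filter (fun v => ∃ u, G.Adj v u ∧ u ∉ D) := by
    simpa using hv
  have hne : (Finset.univ.filter fun v => ∃ u, G.Adj v u ∧ u ∉ D).Nonempty := ⟨v, hmem⟩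
  rw [tgVal, dif_pos hne]
  simp only [if_true]
  exact Nat.add_le_add_left
    (Finset.inf'_le _ (Finset.mem_attach _ ⟨v, hmem⟩)) 1

lemma tgVal_false_le {V : Type*} [Fintype V] (G : SimpleGraph V) (D : Finset V) (k : ℕ)
    (h : ∀ v : V, (∃ w, G.Adj v w ∧ w ∉ D) → tgVal G true (D ∪ G.neighborFinset v) ≤ k) :
    tgVal G false D ≤ 1 + k := by
  by_cases hne : (Finset.univ.filter fun v => ∃ u, G.Adj v u ∧ u ∉ D).Nonempty
  · rw [tgVal, dif_pos hne, if_neg (by simp)]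
    refine Nat.add_le_add_left (Finset.sup'_le _ _ ?_) 1
    rintro ⟨v, hv⟩ -
    simp only [Finset.mem_filter, Finset.mem_univ, true_and] at hv
    exact h v hv
  · rw [tgVal, dif_neg hne]; omega

lemma tgVal_true_le_one {V : Type*} [Fintype V] (G : SimpleGraph V) (D : Finset V) (x : V)
    (h : ∀ y : V, y ∉ D → y = x) : tgVal G true D ≤ 1 := by
  by_cases hne : (Finset.univ.filter fun v => ∃ u, G.Adj v u ∧ u ∉ D).Nonempty
  · obtain ⟨v, hv⟩ := hne
    simp only [Finset.mem_filter, Finset.mem_univ, true_and] at hv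
    obtain ⟨w, hadj, hw⟩ := hv
    have hzero : tgVal G false (D ∪ G.neighborFinset v) = 0 := by
      apply tgVal_eq_zero
      intro y
      by_cases hy : y ∈ D
      · exact Finset.mem_union_left _ hy
      · have : y = x := h y hy
        have hwx : w = x := h w hw
        subst this; subst hwx
        exact Finset.mem_union_right _ (by simpa using hadj)
    calc tgVal G true D ≤ 1 + tgVal G false (D ∪ G.neighborFinset v) :=
          tgVal_true_le G D v ⟨w, hadj, hw⟩
      _ = 1 := by rw [hzero]
  · rw [tgVal, dif_neg hne]; omega

theorem stmt16 {V : Type*} [Fintype V] (G : SimpleGraph V) (u : V)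
    (hu : G.degree u = Fintype.card V - 2) : gammaTG G ≤ 3 := by
  unfold gammaTG
  by_cases hne : (Finset.univ.filter fun v => ∃ w, G.Adj v w ∧ w ∉ (∅ : Finset V)).Nonempty
  · obtain ⟨v0, hv0⟩ := hne
    simp only [Finset.mem_filter, Finset.mem_univ, true_and, Finset.notMem_empty,
      not_false_iff, and_true] at hv0
    obtain ⟨w0, hvw0⟩ := hv0
    -- card V ≥ 3
    have hcard3 : 3 ≤ Fintype.card V := by
      by_contra hlt
      push_neg at hlt
      have hdeg0 : G.degree u = 0 := by omega
      have hnoadj : ∀ y, ¬ G.Adj u y := by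
        intro y hy
        have : y ∈ G.neighborFinset u := by simpa using hy
        rw [← SimpleGraph.card_neighborFinset_eq_degree] at hdeg0
        simp [Finset.card_eq_zero.mp hdeg0] at this
      have hne0 : v0 ≠ w0 := hvw0.ne
      have h2 : ({v0, w0} : Finset V).card = 2 := by
        rw [Finset.card_insert_of_notMem (by simpa using hne0), Finset.card_singleton]
      have hcard2 : Fintype.card V = 2 := by
        have := Finset.card_le_card (Finset.subset_univ ({v0, w0} : Finset V))
        simp only [Finset.card_univ] at this
        omega
      have huniv : (Finset.univ : Finset V) = {v0, w0} := by
        apply (Finset.eq_of_subset_of_card_le (Finset.subset_univ _) _).symm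
        rw [h2, Finset.card_univ, hcard2]
      have hu_mem : u ∈ ({v0, w0} : Finset V) := huniv ▸ Finset.mem_univ u
      simp only [Finset.mem_insert, Finset.mem_singleton] at hu_mem
      rcases hu_mem with rfl | rfl
      · exact hnoadj w0 hvw0
      · exact hnoadj v0 hvw0.symm
    have hdeg : 0 < G.degree u := by omega
    obtain ⟨z0, hz0⟩ : ∃ z, G.Adj u z := by
      rw [← SimpleGraph.card_neighborFinset_eq_degree] at hdeg
      obtain ⟨z, hz⟩ := Finset.card_pos.mp hdeg
      exact ⟨z, by simpa using hz⟩
    -- complement of N(u) has exactly 2 elements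
    have hT : (Finset.univ \ G.neighborFinset u).card = 2 := by
      rw [Finset.card_sdiff_of_subset (Finset.subset_univ _), Finset.card_univ,
        SimpleGraph.card_neighborFinset_eq_degree, hu]
      omega
    obtain ⟨a, b, hab, hTab⟩ := Finset.card_eq_two.mp hT
    calc tgVal G true ∅
        ≤ 1 + tgVal G false (∅ ∪ G.neighborFinset u) :=
          tgVal_true_le G ∅ u ⟨z0, hz0, Finset.notMem_empty _⟩
      _ ≤ 1 + (1 + 1) := by
          refine Nat.add_le_add_left ?_ 1
          apply tgVal_false_le
          rintro v ⟨w, hadj, hw⟩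
          have hwT : w ∈ (Finset.univ \ G.neighborFinset u) := by
            simp only [Finset.mem_union, not_or] at hw
            simp [hw.2]
          rw [hTab] at hwT
          simp only [Finset.mem_insert, Finset.mem_singleton] at hwT
          have key : ∀ x : V, (∀ y : V, y ∉ (∅ ∪ G.neighborFinset u) ∪ G.neighborFinset v →
              y = x) → tgVal G true ((∅ ∪ G.neighborFinset u) ∪ G.neighborFinset v) ≤ 1 :=
            fun x hx => tgVal_true_le_one G _ x hx
          rcases hwT with rfl | rfl
          · apply key b
            intro y hy
            simp only [Finset.mem_union, not_or, Finset.notMem_empty] at hy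
            have hyT : y ∈ (Finset.univ \ G.neighborFinset u) := by simp [hy.1.2]
            rw [hTab] at hyT
            simp only [Finset.mem_insert, Finset.mem_singleton] at hyT
            rcases hyT with rfl | rfl
            · exact absurd (by simpa using hadj) hy.2
            · rfl
          · apply key a
            intro y hy
            simp only [Finset.mem_union, not_or, Finset.notMem_empty] at hy
            have hyT : y ∈ (Finset.univ \ G.neighborFinset u) := by simp [hy.1.2]
            rw [hTab] at hyT
            simp only [Finset.mem_insert, Finset.mem_singleton] at hyT
            rcases hyT with rfl | rfl
            · rfl
            · exact absurd (by simpa using hadj) hy.2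
      _ = 3 := by norm_num
  · rw [tgVal, dif_neg hne]; omega
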